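/- Let E be a finite-dimensional real inner product space and let X, Y, Z be nonempty compact convex subsets of E. Then the collections X ÷ Y and (X + Z) ÷ (Y + Z) coincide: a nonempty compact convex set W belongs to X ÷ Y if and only if it belongs to (X + Z) ÷ (Y + Z). -/
import Mathlib

open Pointwise
open scoped RealInnerProductSpace

/-- The support function of a set `A ⊆ E`: `h_A(p) = sup_{a ∈ A} ⟪p, a⟫`. -/
noncomputable def supportFn {E : Type*} [NormedAddCommGroup E] [InnerProductSpace ℝ E]
    (A : Set E) (p : E) : ℝ :=
  sSup ((fun a => ⟪p, a⟫) '' A)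

/-- `Z` is a member of the generalized Minkowski–Pontryagin difference `X ÷ Y`:
`Z` is nonempty, compact, convex, `X ⊆ Y + Z`, and no nonempty compact convex
proper subset `Z' ⊊ Z` satisfies `X ⊆ Y + Z'`. -/
def MemGMPDiff {E : Type*} [NormedAddCommGroup E] [InnerProductSpace ℝ E]
    (X Y Z : Set E) : Prop :=
  Z.Nonempty ∧ IsCompact Z ∧ Convex ℝ Z ∧ X ⊆ Y + Z ∧
    ∀ Z' : Set E, Z'.Nonempty → IsCompact Z' → Convex ℝ Z' → Z' ⊂ Z → ¬ X ⊆ Y + Z'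

/-- Rådström cancellation. -/
lemma radstrom_cancel {E : Type*} [NormedAddCommGroup E] [InnerProductSpace ℝ E]
    {A B Z : Set E} (hBc : IsClosed B) (hBconv : Convex ℝ B)
    (hZne : Z.Nonempty) (hZc : IsCompact Z)
    (h : A + Z ⊆ B + Z) : A ⊆ B := by
  intro a ha
  by_contra haB
  obtain ⟨f, u, hub, hua⟩ := geometric_hahn_banach_closed_point hBconv hBc haB
  obtain ⟨z₀, hz₀, hmax⟩ := hZc.exists_isMaxOn hZne f.continuous.continuousOn
  have : a + z₀ ∈ B + Z := h (Set.add_mem_add ha hz₀)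
  obtain ⟨b, hb, z, hz, hbz⟩ := this
  have h1 : f z ≤ f z₀ := hmax hz
  have h2 : f a + f z₀ = f b + f z := by
    have := congrArg f hbz
    simpa [map_add] using this.symm
  have : f a ≤ f b := by linarith
  have := hub b hb
  linarith

lemma subset_add_iff {E : Type*} [NormedAddCommGroup E] [InnerProductSpace ℝ E]
    {X Y Z W : Set E}
    (hZne : Z.Nonempty) (hZc : IsCompact Z)
    (hYc : IsCompact Y) (hYconv : Convex ℝ Y)
    (hWc : IsCompact W) (hWconv : Convex ℝ W) :
    X ⊆ Y + W ↔ X + Z ⊆ (Y + Z) + W := by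
  have hre : (Y + Z) + W = (Y + W) + Z := by
    rw [add_right_comm]
  rw [hre]
  constructor
  · intro h
    exact Set.add_subset_add h le_rfl
  · intro h
    exact radstrom_cancel (hYc.add hWc).isClosed (hYconv.add hWconv) hZne hZc h

theorem gmpDiff_cancellation
    {E : Type*} [NormedAddCommGroup E] [InnerProductSpace ℝ E] [FiniteDimensional ℝ E]
    (X Y Z : Set E)
    (hXne : X.Nonempty) (hXc : IsCompact X) (hXconv : Convex ℝ X)
    (hYne : Y.Nonempty) (hYc : IsCompact Y) (hYconv : Convex ℝ Y)
    (hZne : Z.Nonempty) (hZc : IsCompact Z) (hZconv : Convex ℝ Z) :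
    ∀ W : Set E, W.Nonempty → IsCompact W → Convex ℝ W →
      (MemGMPDiff X Y W ↔ MemGMPDiff (X + Z) (Y + Z) W) := by
  intro W hWne hWc hWconv
  unfold MemGMPDiff
  constructor
  · rintro ⟨h1, h2, h3, h4, h5⟩
    refine ⟨h1, h2, h3, (subset_add_iff hZne hZc hYc hYconv hWc hWconv).mp h4, ?_⟩
    intro Z' hZ'ne hZ'c hZ'conv hss h
    exact h5 Z' hZ'ne hZ'c hZ'conv hss
      ((subset_add_iff hZne hZc hYc hYconv hZ'c hZ'conv).mpr h)
  · rintro ⟨h1, h2, h3, h4, h5⟩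
    refine ⟨h1, h2, h3, (subset_add_iff hZne hZc hYc hYconv hWc hWconv).mpr h4, ?_⟩
    intro Z' hZ'ne hZ'c hZ'conv hss h
    exact h5 Z' hZ'ne hZ'c hZ'conv hss
      ((subset_add_iff hZne hZc hYc hYconv hZ'c hZ'conv).mp h)
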